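/- Let D' be a finite distributive lattice whose largest element p = 1_{D'} is join-irreducible, and let (C₀, λ₀, D') be a J(D')-labeled chain. Let C₁ be a finite chain of even length 2m with m ≥ 1, labeled by a map λ₁: Prime(C₁) → J(D') such that, counting from below, every odd-numbered edge of C₁ is labeled p (and the even-numbered edges carry arbitrary labels in J(D')). Let C = C₀ ∔ C₁ be the glued sum with the labeling λ' that extends λ₀ and λ₁. Then (C, λ', D') is a J(D')-labeled chain and srep(C, λ', D') = srep(C₀, λ₀, D'). -/

import Mathlib

/-- The element of `D` represented by the interval `[a,b]` of the chain `Fin (n+1)`,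
whose `i`-th edge is labeled by `lab i` (the empty join being `⊥ = 0`). -/
def erep {D : Type*} [SemilatticeSup D] [OrderBot D] {n : ℕ}
    (lab : Fin n → D) (a b : Fin (n + 1)) : D :=
  Finset.univ.sup fun i : Fin n =>
    if a ≤ i.castSucc ∧ i.succ ≤ b then lab i else ⊥

/-- The subset of `D` represented by the labeled chain `Fin (n+1)`. -/
def srep {D : Type*} [SemilatticeSup D] [OrderBot D] {n : ℕ}
    (lab : Fin n → D) : Set D :=
  {x | ∃ a b : Fin (n + 1), a ≤ b ∧ x = erep lab a b}

section helpers
variable {D : Type*} [SemilatticeSup D] [OrderBot D] {n : ℕ}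

lemma le_erep (lab : Fin n → D) (a b : Fin (n + 1)) (i : Fin n)
    (h1 : (a : ℕ) ≤ i) (h2 : (i : ℕ) < b) : lab i ≤ erep lab a b := by
  have h := Finset.le_sup (f := fun i : Fin n =>
    if a ≤ i.castSucc ∧ i.succ ≤ b then lab i else ⊥) (Finset.mem_univ i)
  rwa [if_pos ⟨by simpa [Fin.le_def] using h1,
    by simp only [Fin.le_def, Fin.val_succ]; omega⟩] at h

lemma erep_le_iff (lab : Fin n → D) (a b : Fin (n + 1)) (x : D) :
    erep lab a b ≤ x ↔ ∀ i : Fin n, (a : ℕ) ≤ i → (i : ℕ) < b → lab i ≤ x := by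
  unfold erep
  rw [Finset.sup_le_iff]
  constructor
  · intro h i h1 h2
    have := h i (Finset.mem_univ i)
    rwa [if_pos ⟨by simpa [Fin.le_def] using h1,
      by simp only [Fin.le_def, Fin.val_succ]; omega⟩] at this
  · intro h i _
    split_ifs with hc
    · refine h i (by simpa [Fin.le_def] using hc.1) ?_
      have := hc.2
      simp only [Fin.le_def, Fin.val_succ] at this
      omega
    · exact bot_le

lemma erep_single (lab : Fin n → D) (i : Fin n) :
    erep lab i.castSucc i.succ = lab i := by
  apply le_antisymm
  · rw [erep_le_iff]
    intro k h1 h2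
    simp only [Fin.coe_castSucc, Fin.val_succ] at h1 h2
    have : k = i := Fin.ext (by omega)
    rw [this]
  · exact le_erep lab _ _ i (by simp) (by simp)

lemma erep_empty (lab : Fin n → D) (a : Fin (n + 1)) : erep lab a a = ⊥ := by
  refine le_antisymm ?_ bot_le
  rw [erep_le_iff]
  intro i h1 h2
  exact absurd (lt_of_le_of_lt h1 h2) (lt_irrefl _)

end helpers

/-- Let `D'` be a finite distributive lattice whose top element `p = 1` is
join-irreducible, let `(Fin (n+1), lab₀, D')` be a `J(D')`-labeled chain, and let
`Fin (2m + 1)` (with `m ≥ 1`) be a chain whose edges are labeled in `J(D')` so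
that, counting from below, every odd-numbered edge is labeled by `p = ⊤`. Then
the glued sum (the chain `Fin (n + 2m + 1)` with labeling `lab'` extending `lab₀`
and `lab₁`) is a `J(D')`-labeled chain and it represents the same subset of `D'`
as `(Fin (n+1), lab₀, D')`. -/
theorem gluedSum_with_interleaved_top_labels_represents_same_set
    (D' : Type) [DistribLattice D'] [Fintype D'] [BoundedOrder D']
    (hp : SupIrred (⊤ : D'))
    (n : ℕ) (lab₀ : Fin n → D')
    (h₀J : ∀ i, SupIrred (lab₀ i))
    (h₀surj : ∀ d : D', SupIrred d → ∃ i, lab₀ i = d)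
    (m : ℕ) (hm : 1 ≤ m)
    (lab₁ : Fin (2 * m) → D')
    (h₁J : ∀ i, SupIrred (lab₁ i))
    (h₁odd : ∀ i : Fin (2 * m), (i : ℕ) % 2 = 0 → lab₁ i = ⊤)
    (lab' : Fin (n + 2 * m) → D')
    (hlab'₀ : ∀ (i : Fin (n + 2 * m)) (h : (i : ℕ) < n), lab' i = lab₀ ⟨i, h⟩)
    (hlab'₁ : ∀ (i : Fin (n + 2 * m)) (h : n ≤ (i : ℕ)),
      lab' i = lab₁ ⟨(i : ℕ) - n, by have := i.isLt; omega⟩) :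
    (∀ i, SupIrred (lab' i)) ∧
    (∀ d : D', SupIrred d → ∃ i, lab' i = d) ∧
    srep lab' = srep lab₀ := by
  have hJ : ∀ i, SupIrred (lab' i) := by
    intro i
    by_cases h : (i : ℕ) < n
    · rw [hlab'₀ i h]; exact h₀J _
    · rw [hlab'₁ i (le_of_not_gt h)]; exact h₁J _
  -- every SupIrred element belongs to srep lab₀
  have hmem : ∀ d : D', SupIrred d → d ∈ srep lab₀ := by
    intro d hd
    obtain ⟨j, hj⟩ := h₀surj d hd
    exact ⟨j.castSucc, j.succ, (Fin.castSucc_lt_succ : j.castSucc < j.succ).le,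
      by rw [erep_single, hj]⟩
  -- restriction: intervals contained in the bottom part
  have key : ∀ (a b : Fin (n + 2 * m + 1)) (ha : (a : ℕ) ≤ n) (hb : (b : ℕ) ≤ n),
      erep lab' a b = erep lab₀ ⟨a, by omega⟩ ⟨b, by omega⟩ := by
    intro a b ha hb
    apply le_antisymm
    · rw [erep_le_iff]
      intro i h1 h2
      have hi : (i : ℕ) < n := by omega
      rw [hlab'₀ i hi]
      exact le_erep lab₀ _ _ ⟨i, hi⟩ (by simpa using h1) (by simpa using h2)
    · rw [erep_le_iff]
      intro i h1 h2
      have hi : (i : ℕ) < n + 2 * m := by have := i.isLt; omega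
      have heq : lab₀ i = lab' ⟨i, hi⟩ := by
        rw [hlab'₀ ⟨i, hi⟩ (by simpa using i.isLt)]
      rw [heq]
      exact le_erep lab' _ _ ⟨i, hi⟩ (by simpa using h1) (by simpa using h2)
  -- an interval containing a top-labeled edge represents ⊤
  have htop : ∀ (a b : Fin (n + 2 * m + 1)) (i : Fin (n + 2 * m)),
      (a : ℕ) ≤ i → (i : ℕ) < b → lab' i = ⊤ → erep lab' a b = ⊤ := by
    intro a b i h1 h2 h3
    exact le_antisymm le_top (h3 ▸ le_erep lab' a b i h1 h2)
  refine ⟨hJ, ?_, ?_⟩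
  · intro d hd
    obtain ⟨i, hi⟩ := h₀surj d hd
    refine ⟨⟨i, by have := i.isLt; omega⟩, ?_⟩
    rw [hlab'₀ _ (by simpa using i.isLt)]
    rw [← hi]
  · ext x
    simp only [srep, Set.mem_setOf_eq]
    constructor
    · rintro ⟨a, b, hab, rfl⟩
      have hab' : (a : ℕ) ≤ (b : ℕ) := hab
      rcases le_or_gt (b : ℕ) n with hb | hb
      · refine ⟨⟨a, by omega⟩, ⟨b, by omega⟩, Fin.mk_le_mk.mpr hab', ?_⟩
        exact key a b (le_trans hab' hb) hb
      · -- b > n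
        rcases le_or_gt (a : ℕ) n with ha | ha
        · -- interval contains the edge n, labeled ⊤
          have hn : n < n + 2 * m := by omega
          have hlt : lab' ⟨n, hn⟩ = ⊤ := by
            rw [hlab'₁ ⟨n, hn⟩ (by simp)]
            exact h₁odd _ (by simp)
          rw [htop a b ⟨n, hn⟩ (by simpa using ha) (by simpa using hb) hlt]
          exact hmem ⊤ hp
        · -- a > n : interval entirely in the top part
          rcases eq_or_lt_of_le hab' with heq2 | hlt
          · -- empty interval
            have : b = a := Fin.ext heq2.symm
            rw [this, erep_empty]
            exact ⟨0, 0, le_refl _, (erep_empty _ _).symm⟩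
          · have hbound : (a : ℕ) < n + 2 * m := by
              have := b.isLt; omega
            by_cases hpar : ((a : ℕ) - n) % 2 = 0
            · -- edge a has even offset: labeled ⊤
              have h3 : lab' ⟨(a : ℕ), hbound⟩ = ⊤ := by
                rw [hlab'₁ ⟨(a : ℕ), hbound⟩ (by simpa using ha.le)]
                exact h₁odd _ (by simpa using hpar)
              rw [htop a b ⟨(a : ℕ), hbound⟩ (by simp) (by simpa using hlt) h3]
              exact hmem ⊤ hp
            · rcases lt_or_ge ((a : ℕ) + 1) (b : ℕ) with hb2 | hb2
              · -- edge a+1 has even offset: labeled ⊤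
                have hbound2 : (a : ℕ) + 1 < n + 2 * m := by
                  have := b.isLt; omega
                have h3 : lab' ⟨(a : ℕ) + 1, hbound2⟩ = ⊤ := by
                  rw [hlab'₁ ⟨(a : ℕ) + 1, hbound2⟩ (by simp; omega)]
                  exact h₁odd _ (by simp; omega)
                rw [htop a b ⟨(a : ℕ) + 1, hbound2⟩ (by simp) (by simpa using hb2) h3]
                exact hmem ⊤ hp
              · -- single edge: b = a + 1
                have hba : (b : ℕ) = (a : ℕ) + 1 := by omega
                have ha' : a = Fin.castSucc ⟨(a : ℕ), hbound⟩ := Fin.ext rfl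
                have hb' : b = Fin.succ ⟨(a : ℕ), hbound⟩ := Fin.ext (by simpa using hba)
                rw [ha', hb', erep_single]
                exact hmem _ (hJ _)
    · rintro ⟨a, b, hab, rfl⟩
      have hab' : (a : ℕ) ≤ (b : ℕ) := hab
      have ha : (a : ℕ) ≤ n := by have := a.isLt; omega
      have hb : (b : ℕ) ≤ n := by have := b.isLt; omega
      refine ⟨⟨(a : ℕ), by omega⟩, ⟨(b : ℕ), by omega⟩, Fin.mk_le_mk.mpr hab', ?_⟩
      rw [key _ _ (by simpa using ha) (by simpa using hb)]
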